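/- Let a ∈ (0,1) and c > 0. Then the infimum of 3u + x + z over all nonnegative reals u, x, z satisfying 3(1−a)·u + 4a·(x+z) ≥ c and u ≤ x equals min(1/(4a), 4/(a+3)) · c. -/

import Mathlib

theorem stmt_3 (a c : ℝ) (ha : 0 < a) (ha1 : a < 1) (hc : 0 < c) :
    sInf {t : ℝ | ∃ u x z : ℝ, 0 ≤ u ∧ 0 ≤ x ∧ 0 ≤ z ∧
        3 * (1 - a) * u + 4 * a * (x + z) ≥ c ∧ u ≤ x ∧ t = 3 * u + x + z}
      = min (1 / (4 * a)) (4 / (a + 3)) * c := by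
  have ha3 : (0:ℝ) < a + 3 := by linarith
  have h4a : (0:ℝ) < 4 * a := by linarith
  have key : ∀ t ∈ {t : ℝ | ∃ u x z : ℝ, 0 ≤ u ∧ 0 ≤ x ∧ 0 ≤ z ∧
        3 * (1 - a) * u + 4 * a * (x + z) ≥ c ∧ u ≤ x ∧ t = 3 * u + x + z},
      min (1 / (4 * a)) (4 / (a + 3)) * c ≤ t := by
    rintro t ⟨u, x, z, hu, hx, hz, hcon, hux, rfl⟩
    rcases le_total (1 / (4 * a)) (4 / (a + 3)) with h | h
    · rw [min_eq_left h]
      rw [div_le_div_iff₀ h4a ha3] at h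
      rw [div_mul_eq_mul_div, div_le_iff₀ h4a]
      nlinarith [mul_nonneg hu (by linarith : (0:ℝ) ≤ 5 * a - 1)]
    · rw [min_eq_right h]
      rw [div_le_div_iff₀ ha3 h4a] at h
      rw [div_mul_eq_mul_div, div_le_iff₀ ha3]
      nlinarith [mul_nonneg (sub_nonneg.2 hux) (by linarith : (0:ℝ) ≤ 1 - 5 * a)]
  apply le_antisymm
  · rcases le_total (1 / (4 * a)) (4 / (a + 3)) with h | h
    · rw [min_eq_left h]
      apply csInf_le ⟨_, key⟩
      refine ⟨0, 0, c / (4 * a), le_refl _, le_refl _, le_of_lt (by positivity), ?_, le_refl _, ?_⟩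
      · have : 4 * a * (0 + c / (4 * a)) = c := by field_simp; ring
        rw [this]; linarith [mul_nonneg (by linarith : (0:ℝ) ≤ 3 * (1 - a)) (le_refl (0:ℝ))]
      · field_simp; ring
    · rw [min_eq_right h]
      apply csInf_le ⟨_, key⟩
      refine ⟨c / (a + 3), c / (a + 3), 0, le_of_lt (by positivity), le_of_lt (by positivity),
        le_refl _, ?_, le_refl _, ?_⟩
      · have : 3 * (1 - a) * (c / (a + 3)) + 4 * a * (c / (a + 3) + 0) = c := by
          field_simp; ring
        rw [this]
      · field_simp; ring
  · refine le_csInf ⟨(1 / (4 * a)) * c, 0, 0, c / (4 * a), le_refl _, le_refl _,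
      le_of_lt (by positivity), ?_, le_refl _, ?_⟩ key
    · have : 4 * a * (0 + c / (4 * a)) = c := by field_simp; ring
      rw [this]; linarith
    · field_simp; ring
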